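/- Let ABC be a nondegenerate triangle in the Euclidean plane with circumcenter O, circumradius R and semiperimeter s, and let P be a point with barycentric coordinates t₁:t₂:t₃ where t₁, t₂, t₃ > 0. Then R² − OP² ≥ 4s²·t₁t₂t₃/(t₁+t₂+t₃)³, with equality if and only if (t₁,t₂,t₃) is proportional to (a,b,c), i.e. if and only if P is the incenter I of the triangle. -/

import Mathlib

/-- In a nondegenerate triangle `ABC` with circumcenter `O`, circumradius `R`
and semiperimeter `s`, if `P` has barycentric coordinates `t₁ : t₂ : t₃` with `t₁, t₂, t₃ > 0`,
then `R² − OP² ≥ 4s²·t₁t₂t₃/(t₁+t₂+t₃)³`, with equality iff `(t₁, t₂, t₃)` is proportional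
to `(a, b, c)` (i.e. `P` is the incenter). -/
theorem stmt_3 (A B C O P : EuclideanSpace ℝ (Fin 2)) (a b c s R t₁ t₂ t₃ : ℝ)
    (hABC : AffineIndependent ℝ ![A, B, C])
    (ha : a = dist B C) (hb : b = dist C A) (hc : c = dist A B)
    (hs : s = (a + b + c) / 2)
    (hOA : dist O A = R) (hOB : dist O B = R) (hOC : dist O C = R)
    (ht₁ : 0 < t₁) (ht₂ : 0 < t₂) (ht₃ : 0 < t₃)
    (hP : ∀ M : EuclideanSpace ℝ (Fin 2),
      (t₁ + t₂ + t₃) • (P - M) = t₁ • (A - M) + t₂ • (B - M) + t₃ • (C - M)) :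
    4 * s ^ 2 * t₁ * t₂ * t₃ / (t₁ + t₂ + t₃) ^ 3 ≤ R ^ 2 - dist O P ^ 2 ∧
      (R ^ 2 - dist O P ^ 2 = 4 * s ^ 2 * t₁ * t₂ * t₃ / (t₁ + t₂ + t₃) ^ 3 ↔
        ∃ k : ℝ, 0 < k ∧ t₁ = k * a ∧ t₂ = k * b ∧ t₃ = k * c) := by
  have hinj : Function.Injective ![A, B, C] := hABC.injective
  have hAB : A ≠ B := by
    intro h
    exact absurd (hinj (show ![A,B,C] 0 = ![A,B,C] 1 by simpa using h)) (by decide)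
  have hBC : B ≠ C := by
    intro h
    exact absurd (hinj (show ![A,B,C] 1 = ![A,B,C] 2 by simpa using h)) (by decide)
  have hCA : C ≠ A := by
    intro h
    exact absurd (hinj (show ![A,B,C] 2 = ![A,B,C] 0 by simpa using h)) (by decide)
  have hapos : 0 < a := ha ▸ dist_pos.mpr hBC
  have hbpos : 0 < b := hb ▸ dist_pos.mpr hCA
  have hcpos : 0 < c := hc ▸ dist_pos.mpr hAB
  set T := t₁ + t₂ + t₃ with hT
  have hTpos : 0 < T := by positivity
  -- vectors from O
  set u : EuclideanSpace ℝ (Fin 2) := A - O with hu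
  set v : EuclideanSpace ℝ (Fin 2) := B - O with hv
  set w : EuclideanSpace ℝ (Fin 2) := C - O with hw
  have hnu : ‖u‖ = R := by rw [hu, ← norm_sub_rev, ← dist_eq_norm]; exact hOA
  have hnv : ‖v‖ = R := by rw [hv, ← norm_sub_rev, ← dist_eq_norm]; exact hOB
  have hnw : ‖w‖ = R := by rw [hw, ← norm_sub_rev, ← dist_eq_norm]; exact hOC
  have huv : ‖u - v‖ = c := by
    rw [hu, hv, hc, dist_eq_norm]; congr 1; abel
  have hvw : ‖v - w‖ = a := by
    rw [hv, hw, ha, dist_eq_norm]; congr 1; abel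
  have hwu : ‖w - u‖ = b := by
    rw [hw, hu, hb, dist_eq_norm]; congr 1; abel
  have iuv : 2 * (inner ℝ u v : ℝ) = 2 * R ^ 2 - c ^ 2 := by
    have := norm_sub_sq_real u v
    rw [huv, hnu, hnv] at this; linarith [this]
  have ivw : 2 * (inner ℝ v w : ℝ) = 2 * R ^ 2 - a ^ 2 := by
    have := norm_sub_sq_real v w
    rw [hvw, hnv, hnw] at this; linarith [this]
  have iwu : 2 * (inner ℝ w u : ℝ) = 2 * R ^ 2 - b ^ 2 := by
    have := norm_sub_sq_real w u
    rw [hwu, hnw, hnu] at this; linarith [this]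
  have hPO : T • (P - O) = t₁ • u + t₂ • v + t₃ • w := hP O
  have hdist : dist O P ^ 2 = ‖P - O‖ ^ 2 := by
    rw [dist_eq_norm, ← norm_sub_rev]
  have hnorm2 : T ^ 2 * ‖P - O‖ ^ 2 = ‖t₁ • u + t₂ • v + t₃ • w‖ ^ 2 := by
    rw [← hPO, norm_smul, Real.norm_eq_abs, abs_of_pos hTpos]; ring
  have hexp : ‖t₁ • u + t₂ • v + t₃ • w‖ ^ 2
      = t₁ ^ 2 * R ^ 2 + t₂ ^ 2 * R ^ 2 + t₃ ^ 2 * R ^ 2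
        + t₁ * t₂ * (2 * (inner ℝ u v : ℝ)) + t₂ * t₃ * (2 * (inner ℝ v w : ℝ))
        + t₃ * t₁ * (2 * (inner ℝ w u : ℝ)) := by
    have h1 : ‖t₁ • u + t₂ • v + t₃ • w‖ ^ 2
        = (inner ℝ (t₁ • u + t₂ • v + t₃ • w) (t₁ • u + t₂ • v + t₃ • w) : ℝ) := by
      rw [real_inner_self_eq_norm_sq]
    rw [h1]
    simp only [inner_add_left, inner_add_right, real_inner_smul_left, real_inner_smul_right]
    rw [real_inner_self_eq_norm_sq u, real_inner_self_eq_norm_sq v,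
      real_inner_self_eq_norm_sq w, hnu, hnv, hnw,
      real_inner_comm v u, real_inner_comm w v, real_inner_comm u w]
    ring
  -- the key power-of-a-point style identity
  have key : R ^ 2 - dist O P ^ 2 = (t₂ * t₃ * a ^ 2 + t₃ * t₁ * b ^ 2 + t₁ * t₂ * c ^ 2) / T ^ 2 := by
    rw [hdist]
    have h2 : T ^ 2 * ‖P - O‖ ^ 2
        = T ^ 2 * R ^ 2 - (t₂ * t₃ * a ^ 2 + t₃ * t₁ * b ^ 2 + t₁ * t₂ * c ^ 2) := by
      rw [hnorm2, hexp, iuv, ivw, iwu, hT]; ring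
    rw [eq_div_iff (by positivity : (T:ℝ) ^ 2 ≠ 0)]
    linarith [h2]
  -- SOS identity
  have sos : T * (t₂ * t₃ * a ^ 2 + t₃ * t₁ * b ^ 2 + t₁ * t₂ * c ^ 2)
      - (a + b + c) ^ 2 * (t₁ * t₂ * t₃)
      = t₃ * (a * t₂ - b * t₁) ^ 2 + t₁ * (b * t₃ - c * t₂) ^ 2 + t₂ * (c * t₁ - a * t₃) ^ 2 := by
    rw [hT]; ring
  have hs2 : 4 * s ^ 2 = (a + b + c) ^ 2 := by rw [hs]; ring
  have hT2 : (0:ℝ) < T ^ 2 := pow_pos hTpos 2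
  have hT3 : (0:ℝ) < T ^ 3 := pow_pos hTpos 3
  have n1 : 0 ≤ t₃ * (a * t₂ - b * t₁) ^ 2 := by positivity
  have n2 : 0 ≤ t₁ * (b * t₃ - c * t₂) ^ 2 := by positivity
  have n3 : 0 ≤ t₂ * (c * t₁ - a * t₃) ^ 2 := by positivity
  have main : (a + b + c) ^ 2 * (t₁ * t₂ * t₃)
      ≤ T * (t₂ * t₃ * a ^ 2 + t₃ * t₁ * b ^ 2 + t₁ * t₂ * c ^ 2) := by linarith
  constructor
  · rw [key, hs2, div_le_div_iff₀ hT3 hT2]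
    calc (a + b + c) ^ 2 * t₁ * t₂ * t₃ * T ^ 2
        = ((a + b + c) ^ 2 * (t₁ * t₂ * t₃)) * T ^ 2 := by ring
      _ ≤ (T * (t₂ * t₃ * a ^ 2 + t₃ * t₁ * b ^ 2 + t₁ * t₂ * c ^ 2)) * T ^ 2 :=
          mul_le_mul_of_nonneg_right main (le_of_lt hT2)
      _ = (t₂ * t₃ * a ^ 2 + t₃ * t₁ * b ^ 2 + t₁ * t₂ * c ^ 2) * T ^ 3 := by ring
  · rw [key, hs2]
    constructor
    · intro h
      have h' := (div_eq_div_iff (ne_of_gt hT2) (ne_of_gt hT3)).mp h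
      have heq : T * (t₂ * t₃ * a ^ 2 + t₃ * t₁ * b ^ 2 + t₁ * t₂ * c ^ 2)
          = (a + b + c) ^ 2 * (t₁ * t₂ * t₃) := by
        have h'' : (T * (t₂ * t₃ * a ^ 2 + t₃ * t₁ * b ^ 2 + t₁ * t₂ * c ^ 2)) * T ^ 2
            = ((a + b + c) ^ 2 * (t₁ * t₂ * t₃)) * T ^ 2 := by linear_combination h'
        exact mul_right_cancel₀ (ne_of_gt hT2) h''
      have e1 : t₃ * (a * t₂ - b * t₁) ^ 2 = 0 := le_antisymm (by linarith) n1
      have e2 : t₁ * (b * t₃ - c * t₂) ^ 2 = 0 := le_antisymm (by linarith) n2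
      have h3 : a * t₂ - b * t₁ = 0 := by
        have := (mul_eq_zero.mp e1).resolve_left (ne_of_gt ht₃)
        exact pow_eq_zero_iff two_ne_zero |>.mp this
      have h4 : b * t₃ - c * t₂ = 0 := by
        have := (mul_eq_zero.mp e2).resolve_left (ne_of_gt ht₁)
        exact pow_eq_zero_iff two_ne_zero |>.mp this
      have h5 : a * t₃ - c * t₁ = 0 := by
        have hb0 : b * (a * t₃ - c * t₁) = 0 := by linear_combination a * h4 + c * h3
        exact (mul_eq_zero.mp hb0).resolve_left (ne_of_gt hbpos)
      refine ⟨t₁ / a, by positivity, (div_mul_cancel₀ t₁ (ne_of_gt hapos)).symm, ?_, ?_⟩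
      · rw [eq_comm, div_mul_eq_mul_div, div_eq_iff (ne_of_gt hapos)]
        linarith
      · rw [eq_comm, div_mul_eq_mul_div, div_eq_iff (ne_of_gt hapos)]
        linarith
    · rintro ⟨k, hk, rfl, rfl, rfl⟩
      rw [div_eq_div_iff (ne_of_gt hT2) (ne_of_gt hT3), hT]
      ring
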